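/- The set {(ξ1, ξ2, ξ3, ξ4) ∈ ℝ⁴ : ξ1 < 0, ξ2 > 0, ξ3 > 0, ξ4 > 0, ξ1 + ξ2 + ξ3 + ξ4 = 0, and |ξ1|^{1/2} + |ξ2|^{1/2} = |ξ3|^{1/2} + |ξ4|^{1/2}} is equal to the two-parameter family {(−λ(b² + b + 1)², λb², λ(b + 1)², λ(b + 1)²b²) : λ > 0, b > 0}. -/

import Mathlib

/-- The set of Benjamin–Feir resonances (four-wave resonances for `Λ(ξ) = |ξ|^(1/2)` in the
sign configuration `(+,+,-,-)` with `ξ1 < 0` and `ξ2, ξ3, ξ4 > 0`) coincides with the explicit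
two-parameter family `(-λ(b²+b+1)², λb², λ(b+1)², λ(b+1)²b²)`, `λ > 0`, `b > 0`. -/
theorem benjamin_feir_family :
    {p : ℝ × ℝ × ℝ × ℝ | p.1 < 0 ∧ 0 < p.2.1 ∧ 0 < p.2.2.1 ∧ 0 < p.2.2.2 ∧
        p.1 + p.2.1 + p.2.2.1 + p.2.2.2 = 0 ∧
        Real.sqrt |p.1| + Real.sqrt |p.2.1| = Real.sqrt |p.2.2.1| + Real.sqrt |p.2.2.2|} =
      {p : ℝ × ℝ × ℝ × ℝ | ∃ l : ℝ, 0 < l ∧ ∃ b : ℝ, 0 < b ∧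
        p = (-(l * (b ^ 2 + b + 1) ^ 2), l * b ^ 2, l * (b + 1) ^ 2,
          l * (b + 1) ^ 2 * b ^ 2)} := by
  ext ⟨x1, x2, x3, x4⟩
  simp only [Set.mem_setOf_eq]
  constructor
  · rintro ⟨h1, h2, h3, h4, hsum, heq⟩
    set s1 := Real.sqrt (-x1) with hs1def
    set s2 := Real.sqrt x2 with hs2def
    set s3 := Real.sqrt x3 with hs3def
    set s4 := Real.sqrt x4 with hs4def
    have hs2 : 0 < s2 := Real.sqrt_pos.2 h2
    have hs3 : 0 < s3 := Real.sqrt_pos.2 h3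
    have hs4 : 0 < s4 := Real.sqrt_pos.2 h4
    have e1 : s1 ^ 2 = -x1 := Real.sq_sqrt (by linarith)
    have e2 : s2 ^ 2 = x2 := Real.sq_sqrt h2.le
    have e3 : s3 ^ 2 = x3 := Real.sq_sqrt h3.le
    have e4 : s4 ^ 2 = x4 := Real.sq_sqrt h4.le
    rw [abs_of_neg h1, abs_of_pos h2, abs_of_pos h3, abs_of_pos h4] at heq
    have hs1e : s1 = s3 + s4 - s2 := by
      simp only [← hs1def, ← hs2def, ← hs3def, ← hs4def] at heq; linarith
    have key : s2 * (s3 + s4) = s3 * s4 := by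
      have := e1
      rw [hs1e] at this
      nlinarith [e2, e3, e4, hsum]
    have h34 : s3 + s4 ≠ 0 := by positivity
    have hs3' : s3 ≠ 0 := hs3.ne'
    have hs2v : s2 = s3 * s4 / (s3 + s4) := by
      field_simp
      linarith [key]
    refine ⟨(s3 ^ 2 / (s3 + s4)) ^ 2, by positivity, s4 / s3, by positivity, ?_⟩
    have hx2 : x2 = (s3 * s4 / (s3 + s4)) ^ 2 := by rw [← e2, hs2v]
    have hx1 : x1 = -(x2 + x3 + x4) := by linarith
    simp only [Prod.mk.injEq]
    refine ⟨?_, ?_, ?_, ?_⟩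
    · rw [hx1, hx2, ← e3, ← e4]
      field_simp
      ring
    · rw [hx2]
      field_simp
    · rw [← e3]
      field_simp
      ring
    · rw [← e4]
      field_simp
      ring
  · rintro ⟨l, hl, b, hb, hp⟩
    simp only [Prod.mk.injEq] at hp
    obtain ⟨rfl, rfl, rfl, rfl⟩ := hp
    have hr : (0:ℝ) < Real.sqrt l := Real.sqrt_pos.2 hl
    set r := Real.sqrt l with hrdef
    have hrl : r ^ 2 = l := Real.sq_sqrt hl.le
    have hpos : (0:ℝ) < l * (b ^ 2 + b + 1) ^ 2 := by positivity
    have q1 : Real.sqrt |(-(l * (b ^ 2 + b + 1) ^ 2))| = r * (b ^ 2 + b + 1) := by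
      rw [abs_of_neg (by linarith), neg_neg,
        show l * (b ^ 2 + b + 1) ^ 2 = (r * (b ^ 2 + b + 1)) ^ 2 by rw [mul_pow, hrl],
        Real.sqrt_sq (by positivity)]
    have q2 : Real.sqrt |l * b ^ 2| = r * b := by
      rw [abs_of_pos (by positivity),
        show l * b ^ 2 = (r * b) ^ 2 by rw [mul_pow, hrl],
        Real.sqrt_sq (by positivity)]
    have q3 : Real.sqrt |l * (b + 1) ^ 2| = r * (b + 1) := by
      rw [abs_of_pos (by positivity),
        show l * (b + 1) ^ 2 = (r * (b + 1)) ^ 2 by rw [mul_pow, hrl],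
        Real.sqrt_sq (by positivity)]
    have q4 : Real.sqrt |l * (b + 1) ^ 2 * b ^ 2| = r * (b + 1) * b := by
      rw [abs_of_pos (by positivity),
        show l * (b + 1) ^ 2 * b ^ 2 = (r * (b + 1) * b) ^ 2 by rw [mul_pow, mul_pow, hrl],
        Real.sqrt_sq (by positivity)]
    refine ⟨by linarith, by positivity, by positivity, by positivity, by ring, ?_⟩
    simp only [q1, q2, q3, q4]
    ring
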